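/- There exists a constant c > 0 such that for all Schwartz vector fields u, v : ℝ³ → ℝ³, (∫_{ℝ³} ‖(u·∇)v(x)‖² dx)^{1/2} ≤ c · (∫_{ℝ³} (‖u(x)‖² + ‖Du(x)‖² + ‖D²u(x)‖²) dx)^{1/2} · (∫_{ℝ³} (‖v(x)‖² + ‖Dv(x)‖² + ‖D²v(x)‖²) dx)^{1/2}. -/

import Mathlib

set_option maxHeartbeats 1000000

open MeasureTheory Metric Filter
open scoped ENNReal NNReal Topology

noncomputable section SobolevAux
set_option linter.unusedSectionVars false
local notation "E" => EuclideanSpace ℝ (Fin 3)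

variable {F : Type*} [NormedAddCommGroup F] [NormedSpace ℝ F]

lemma norm_fderiv_fderiv' (f : E → F) (x : E) :
    ‖fderiv ℝ (fderiv ℝ f) x‖ = ‖iteratedFDeriv ℝ 2 f x‖ := by
  rw [← norm_iteratedFDeriv_fderiv]
  rw [iteratedFDeriv_succ_eq_comp_right]
  simp [LinearIsometryEquiv.norm_map]

lemma schwartz_sq_integrable (f : SchwartzMap E F) :
    Integrable (fun x => ‖f x‖^2) volume := by
  have h := f.integrable (μ := volume)
  refine ((h.norm.const_mul ((SchwartzMap.seminorm ℝ 0 0) f)).mono' ?_ ?_)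
  · exact (f.continuous.norm.pow 2).aestronglyMeasurable
  · filter_upwards with x
    have h1 : ‖f x‖ ≤ (SchwartzMap.seminorm ℝ 0 0) f := by
      simpa using f.le_seminorm ℝ 0 0 x
    have : ‖f x‖^2 ≤ ((SchwartzMap.seminorm ℝ 0 0) f) * ‖f x‖ := by
      nlinarith [norm_nonneg (f x)]
    simpa [abs_of_nonneg (sq_nonneg ‖f x‖)] using this

lemma schwartz_memLp2 (f : SchwartzMap E F) : MemLp (⇑f) 2 volume :=
  (memLp_two_iff_integrable_sq_norm f.continuous.aestronglyMeasurable).mpr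
    (schwartz_sq_integrable f)

lemma eLpNorm_two_eq_sqrt {g : E → F} (hg : MemLp g 2 volume) :
    eLpNorm g 2 volume = ENNReal.ofReal (Real.sqrt (∫ x, ‖g x‖^2)) := by
  rw [hg.eLpNorm_eq_integral_rpow_norm (by norm_num) (by norm_num)]
  rw [Real.sqrt_eq_rpow]
  norm_num

lemma half_eq : ((1:ℝ≥0∞)/2) = 1/6 + 1/3 := by
  simp only [one_div]
  rw [show (2:ℝ≥0∞) = ((2:ℝ≥0):ℝ≥0∞) by norm_num, show (6:ℝ≥0∞) = ((6:ℝ≥0):ℝ≥0∞) by norm_num,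
    show (3:ℝ≥0∞) = ((3:ℝ≥0):ℝ≥0∞) by norm_num, ← ENNReal.coe_inv (by norm_num),
    ← ENNReal.coe_inv (by norm_num), ← ENNReal.coe_inv (by norm_num), ← ENNReal.coe_add]
  norm_cast
  rw [NNReal.eq_iff]
  push_cast
  norm_num


lemma interp36 {g : E → F} (hg : AEStronglyMeasurable g volume) :
    eLpNorm g 3 volume ≤ eLpNorm g 2 volume ^ ((1:ℝ)/2) * eLpNorm g 6 volume ^ ((1:ℝ)/2) := by
  have hm : AEMeasurable (fun x => (‖g x‖₊ : ℝ≥0∞)) volume := hg.enorm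
  set X2 := ∫⁻ x, (‖g x‖₊ : ℝ≥0∞) ^ (2:ℝ) ∂(volume : Measure E) with hX2
  set X6 := ∫⁻ x, (‖g x‖₊ : ℝ≥0∞) ^ (6:ℝ) ∂(volume : Measure E) with hX6
  have key : (∫⁻ x, (‖g x‖₊ : ℝ≥0∞) ^ (3:ℝ) ∂volume) ≤ X2 ^ ((3:ℝ)/4) * X6 ^ ((1:ℝ)/4) := by
    have hpq : Real.HolderConjugate (4/3) 4 := by constructor <;> norm_num
    have H := ENNReal.lintegral_mul_le_Lp_mul_Lq (volume : Measure E) hpq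
      (f := fun x => (‖g x‖₊ : ℝ≥0∞) ^ ((3:ℝ)/2)) (g := fun x => (‖g x‖₊ : ℝ≥0∞) ^ ((3:ℝ)/2))
      (hm.pow_const _) (hm.pow_const _)
    calc (∫⁻ x, (‖g x‖₊ : ℝ≥0∞) ^ (3:ℝ) ∂volume)
        = ∫⁻ x, ((fun x => (‖g x‖₊ : ℝ≥0∞) ^ ((3:ℝ)/2)) * fun x => (‖g x‖₊ : ℝ≥0∞) ^ ((3:ℝ)/2)) x ∂volume := by
          apply lintegral_congr; intro x
          simp only [Pi.mul_apply]
          rw [← ENNReal.rpow_add_of_nonneg _ _ (by norm_num) (by norm_num)]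
          norm_num
      _ ≤ (∫⁻ x, ((‖g x‖₊:ℝ≥0∞) ^ ((3:ℝ)/2)) ^ ((4:ℝ)/3) ∂volume) ^ (1/((4:ℝ)/3))
            * (∫⁻ x, ((‖g x‖₊:ℝ≥0∞) ^ ((3:ℝ)/2)) ^ ((4:ℝ)) ∂volume) ^ (1/(4:ℝ)) := H
      _ = X2 ^ ((3:ℝ)/4) * X6 ^ ((1:ℝ)/4) := by
          rw [hX2, hX6]
          congr 1
          · congr 1
            · apply lintegral_congr; intro x
              rw [← ENNReal.rpow_mul]; norm_num
            · norm_num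
          · congr 1
            apply lintegral_congr; intro x
            rw [← ENNReal.rpow_mul]; norm_num
  have e3 : eLpNorm g 3 volume = (∫⁻ x, (‖g x‖₊ : ℝ≥0∞) ^ (3:ℝ) ∂volume) ^ ((1:ℝ)/3) := by
    rw [eLpNorm_eq_lintegral_rpow_enorm_toReal (by norm_num) (by norm_num)]
    norm_num
    rfl
  have e2 : eLpNorm g 2 volume = X2 ^ ((1:ℝ)/2) := by
    rw [eLpNorm_eq_lintegral_rpow_enorm_toReal (by norm_num) (by norm_num), hX2]
    norm_num
    rfl
  have e6 : eLpNorm g 6 volume = X6 ^ ((1:ℝ)/6) := by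
    rw [eLpNorm_eq_lintegral_rpow_enorm_toReal (by norm_num) (by norm_num), hX6]
    norm_num
    rfl
  rw [e3, e2, e6]
  calc (∫⁻ x, (‖g x‖₊ : ℝ≥0∞) ^ (3:ℝ) ∂volume) ^ ((1:ℝ)/3)
      ≤ (X2 ^ ((3:ℝ)/4) * X6 ^ ((1:ℝ)/4)) ^ ((1:ℝ)/3) := by
        exact ENNReal.rpow_le_rpow key (by norm_num)
    _ = (X2 ^ ((1:ℝ)/2)) ^ ((1:ℝ)/2) * (X6 ^ ((1:ℝ)/6)) ^ ((1:ℝ)/2) := by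
        rw [ENNReal.mul_rpow_of_nonneg _ _ (by norm_num)]
        rw [← ENNReal.rpow_mul, ← ENNReal.rpow_mul, ← ENNReal.rpow_mul, ← ENNReal.rpow_mul]
        norm_num

variable [FiniteDimensional ℝ F]

lemma sobolev6 : ∃ C : ℝ≥0, ∀ f : SchwartzMap E F,
    eLpNorm (⇑f) 6 volume ≤
      C * (eLpNorm (fderiv ℝ (⇑f)) 2 volume + eLpNorm (⇑f) 2 volume) := by
  -- the bump function
  let φ : ContDiffBump (0 : E) := ⟨1, 2, one_pos, one_lt_two⟩
  have hφc : Continuous (fderiv ℝ (⇑φ)) :=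
    (φ.contDiff (n := 2)).continuous_fderiv (by norm_num)
  obtain ⟨M0, hM0⟩ := hφc.bounded_above_of_compact_support
    (φ.hasCompactSupport.fderiv (𝕜 := ℝ))
  set M : ℝ≥0 := ⟨max M0 0, le_max_right _ _⟩ with hM
  have hMb : ∀ y, ‖fderiv ℝ (⇑φ) y‖ ≤ M := fun y => (hM0 y).trans (le_max_left _ _)
  set C₀ : ℝ≥0 := SNormLESNormFDerivOfEqConst F (volume : Measure E) 2 with hC₀
  refine ⟨C₀ * (1 + M), fun f => ?_⟩
  -- the scaled cutoffs
  set s : ℕ → ℝ := fun n => ((n : ℝ) + 1)⁻¹ with hs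
  have hs_pos : ∀ n, 0 < s n := fun n => by positivity
  have hs_le : ∀ n, s n ≤ 1 := fun n => by
    rw [hs]; rw [inv_le_one_iff₀]; right; simp [le_add_of_nonneg_left]
  set L : ℕ → (E →L[ℝ] E) := fun n => s n • ContinuousLinearMap.id ℝ E with hL
  have hLapp : ∀ n x, L n x = s n • x := fun n x => rfl
  have hLnorm : ∀ n, ‖L n‖ ≤ 1 := fun n => by
    show ‖s n • ContinuousLinearMap.id ℝ E‖ ≤ 1
    refine (norm_smul (s n) (ContinuousLinearMap.id ℝ E)).le.trans ?_
    calc ‖s n‖ * ‖ContinuousLinearMap.id ℝ E‖ ≤ 1 * 1 := by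
          apply mul_le_mul ?_ ContinuousLinearMap.norm_id_le (norm_nonneg _) one_pos.le
          rw [Real.norm_eq_abs, abs_of_pos (hs_pos n)]; exact hs_le n
      _ = 1 := one_mul 1
  set χ : ℕ → E → ℝ := fun n x => φ (L n x) with hχ
  set w : ℕ → E → F := fun n x => χ n x • f x with hw
  -- properties of the cutoffs
  have hχ_smooth : ∀ n, ContDiff ℝ 2 (χ n) := fun n =>
    (φ.contDiff (n := 2)).comp (L n).contDiff
  have hχ_le : ∀ n x, ‖χ n x‖ ≤ 1 := fun n x => by
    rw [Real.norm_eq_abs, abs_of_nonneg φ.nonneg]; exact φ.le_one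
  have hχ_cs : ∀ n, HasCompactSupport (χ n) := fun n => by
    have : χ n = (⇑φ) ∘ (fun x : E => s n • x) := rfl
    rw [this]
    exact φ.hasCompactSupport.comp_homeomorph
      (Homeomorph.smulOfNeZero (s n) (hs_pos n).ne')
  have hχ_one : ∀ (n : ℕ) (x : E), ‖x‖ ≤ (n : ℝ) + 1 → χ n x = 1 := fun n x hx => by
    apply φ.one_of_mem_closedBall
    rw [mem_closedBall_zero_iff, hLapp, norm_smul, Real.norm_eq_abs,
      abs_of_pos (hs_pos n)]
    rw [hs]
    rw [inv_mul_le_iff₀ (by positivity)]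
    have hrIn : φ.rIn = 1 := rfl
    simpa [hrIn] using hx
  have hχ_fderiv : ∀ (n : ℕ) (x : E), ‖fderiv ℝ (χ n) x‖ ≤ M := fun n x => by
    have hde : DifferentiableAt ℝ (⇑φ) (L n x) :=
      ((φ.contDiff (n := 1)).differentiable (by norm_num)) _
    have : fderiv ℝ (χ n) x = (fderiv ℝ (⇑φ) (L n x)).comp (L n) := by
      rw [hχ]
      have := fderiv_comp (𝕜 := ℝ) x hde ((L n).differentiableAt)
      simpa [ContinuousLinearMap.fderiv, Function.comp_def] using this
    rw [this]
    calc ‖(fderiv ℝ (⇑φ) (L n x)).comp (L n)‖ ≤ ‖fderiv ℝ (⇑φ) (L n x)‖ * ‖L n‖ :=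
          ContinuousLinearMap.opNorm_comp_le _ _
      _ ≤ M * 1 := mul_le_mul (hMb _) (hLnorm n) (norm_nonneg _) M.2
      _ = M := mul_one _
  -- continuity facts
  have hf_cont : Continuous (⇑f) := f.continuous
  have hDf_cont : Continuous (fderiv ℝ (⇑f)) :=
    (f.smooth 2).continuous_fderiv (by norm_num)
  have hw_cont : ∀ n : ℕ, Continuous (w n) := fun n =>
    ((hχ_smooth n).continuous).smul hf_cont
  have hw1 : ∀ n : ℕ, ContDiff ℝ 1 (w n) := fun n =>
    ((hχ_smooth n).smul (f.smooth 2)).of_le one_le_two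
  have hw2 : ∀ n : ℕ, HasCompactSupport (w n) := fun n => by
    have h := (hχ_cs n).smul_right (f' := ⇑f)
    exact h
  -- fderiv of the product
  have hfd : ∀ (n : ℕ) (x : E), fderiv ℝ (w n) x
      = χ n x • fderiv ℝ (⇑f) x + (fderiv ℝ (χ n) x).smulRight (f x) := fun n x =>
    fderiv_smul (((hχ_smooth n).differentiable (by norm_num)) x) (f.differentiable x)
  have hbound : ∀ n : ℕ, eLpNorm (fderiv ℝ (w n)) 2 volume
      ≤ eLpNorm (fderiv ℝ (⇑f)) 2 volume + (M : ℝ≥0∞) * eLpNorm (⇑f) 2 volume := by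
    intro n
    have heq : eLpNorm (fderiv ℝ (w n)) 2 volume = eLpNorm
        ((fun x => χ n x • fderiv ℝ (⇑f) x)
          + fun x => (fderiv ℝ (χ n) x).smulRight (f x)) 2 volume := by
      congr 1; funext x; rw [hfd n x]; rfl
    rw [heq]
    have hDχ_cont : Continuous (fderiv ℝ (χ n)) :=
      (hχ_smooth n).continuous_fderiv (by norm_num)
    refine (eLpNorm_add_le
      (((hχ_smooth n).continuous.smul hDf_cont).aestronglyMeasurable)
      ((((ContinuousLinearMap.smulRightL ℝ E F).continuous.comp hDχ_cont).clm_apply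
        hf_cont).aestronglyMeasurable) one_le_two).trans ?_
    have h1 : eLpNorm (fun x => χ n x • fderiv ℝ (⇑f) x) 2 volume
        ≤ eLpNorm (fderiv ℝ (⇑f)) 2 volume := by
      apply eLpNorm_mono
      intro x
      calc ‖χ n x • fderiv ℝ (⇑f) x‖ = ‖χ n x‖ * ‖fderiv ℝ (⇑f) x‖ :=
            norm_smul (χ n x) (fderiv ℝ (⇑f) x)
        _ ≤ 1 * ‖fderiv ℝ (⇑f) x‖ :=
            mul_le_mul_of_nonneg_right (hχ_le n x) (norm_nonneg _)
        _ = ‖fderiv ℝ (⇑f) x‖ := one_mul _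
    have h2 : eLpNorm (fun x => (fderiv ℝ (χ n) x).smulRight (f x)) 2 volume
        ≤ (M : ℝ≥0∞) * eLpNorm (⇑f) 2 volume := by
      have := eLpNorm_le_nnreal_smul_eLpNorm_of_ae_le_mul (μ := (volume : Measure (EuclideanSpace ℝ (Fin 3))))
        (c := M) (f := fun x => (fderiv ℝ (χ n) x).smulRight (f x)) (g := ⇑f)
        (Eventually.of_forall fun x => by
          simp only []
          rw [← NNReal.coe_le_coe]
          push_cast [coe_nnnorm]
          rw [ContinuousLinearMap.norm_smulRight_apply]
          exact mul_le_mul_of_nonneg_right (hχ_fderiv n x) (norm_nonneg _)) 2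
      simpa [ENNReal.smul_def] using this
    exact add_le_add h1 h2
  -- the Gagliardo-Nirenberg-Sobolev inequality for each cutoff
  have hGNS : ∀ n : ℕ, eLpNorm (w n) 6 volume
      ≤ ((C₀ * (1 + M) : ℝ≥0) : ℝ≥0∞)
        * (eLpNorm (fderiv ℝ (⇑f)) 2 volume + eLpNorm (⇑f) 2 volume) := by
    intro n
    have hp' : (((6 : ℝ≥0)) : ℝ)⁻¹ = (((2 : ℝ≥0)) : ℝ)⁻¹ - ((Module.finrank ℝ E : ℝ))⁻¹ := by
      simp
      norm_num
    have h := eLpNorm_le_eLpNorm_fderiv_of_eq (volume : Measure E) (hw1 n) (hw2 n)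
      (p := 2) (p' := 6) one_le_two (by simp) hp'
    have h' : eLpNorm (w n) 6 volume ≤ (C₀ : ℝ≥0∞) * eLpNorm (fderiv ℝ (w n)) 2 volume := by
      rw [hC₀]
      simpa using h
    calc eLpNorm (w n) 6 volume
        ≤ (C₀ : ℝ≥0∞) * (eLpNorm (fderiv ℝ (⇑f)) 2 volume
            + (M : ℝ≥0∞) * eLpNorm (⇑f) 2 volume) := h'.trans (by gcongr; exact hbound n)
      _ ≤ ((C₀ * (1 + M) : ℝ≥0) : ℝ≥0∞)
            * (eLpNorm (fderiv ℝ (⇑f)) 2 volume + eLpNorm (⇑f) 2 volume) := by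
          push_cast
          rw [mul_assoc]
          gcongr
          rw [add_mul, one_mul, mul_add]
          gcongr
          · exact le_add_right le_rfl
          · exact le_add_left le_rfl
  -- Fatou's lemma to pass to the limit
  set A := eLpNorm (fderiv ℝ (⇑f)) 2 volume with hA
  set B := eLpNorm (⇑f) 2 volume with hB
  set K := ((C₀ * (1 + M) : ℝ≥0) : ℝ≥0∞) * (A + B) with hK
  have hwm : ∀ n : ℕ, AEMeasurable (fun x => (‖w n x‖₊ : ℝ≥0∞) ^ (6:ℝ))
      (volume : Measure E) := fun n =>
    ((hw_cont n).aestronglyMeasurable.enorm).pow_const _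
  have hpt : ∀ x : E, (‖f x‖₊ : ℝ≥0∞) ^ (6:ℝ)
      = liminf (fun n : ℕ => (‖w n x‖₊ : ℝ≥0∞) ^ (6:ℝ)) atTop := by
    intro x
    have hev : ∀ᶠ n : ℕ in atTop,
        (fun n : ℕ => (‖w n x‖₊ : ℝ≥0∞) ^ (6:ℝ)) n
          = (fun _ : ℕ => (‖f x‖₊ : ℝ≥0∞) ^ (6:ℝ)) n := by
      filter_upwards [eventually_ge_atTop ⌈‖x‖⌉₊] with n hn
      have hxn : ‖x‖ ≤ (n : ℝ) + 1 := by
        calc ‖x‖ ≤ (⌈‖x‖⌉₊ : ℝ) := Nat.le_ceil _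
          _ ≤ (n : ℝ) := by exact_mod_cast hn
          _ ≤ (n : ℝ) + 1 := by linarith
      have : w n x = f x := by
        rw [hw]
        simp only [hχ_one n x hxn, one_smul]
      rw [this]
    rw [liminf_congr hev, liminf_const]
  have hper : ∀ n : ℕ, (∫⁻ x, (‖w n x‖₊ : ℝ≥0∞) ^ (6:ℝ) ∂(volume : Measure E))
      ≤ K ^ (6:ℝ) := by
    intro n
    have e6 : eLpNorm (w n) 6 volume
        = (∫⁻ x, (‖w n x‖₊ : ℝ≥0∞) ^ (6:ℝ) ∂(volume : Measure E)) ^ ((1:ℝ)/6) := by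
      rw [eLpNorm_eq_lintegral_rpow_enorm_toReal (by norm_num) (by norm_num)]
      norm_num
      rfl
    have : (∫⁻ x, (‖w n x‖₊ : ℝ≥0∞) ^ (6:ℝ) ∂(volume : Measure E))
        = (eLpNorm (w n) 6 volume) ^ (6:ℝ) := by
      rw [e6, ← ENNReal.rpow_mul]
      norm_num
    rw [this]
    exact ENNReal.rpow_le_rpow (hGNS n) (by norm_num)
  have hfatou : (∫⁻ x, (‖f x‖₊ : ℝ≥0∞) ^ (6:ℝ) ∂(volume : Measure E)) ≤ K ^ (6:ℝ) := by
    calc (∫⁻ x, (‖f x‖₊ : ℝ≥0∞) ^ (6:ℝ) ∂(volume : Measure E))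
        = ∫⁻ x, liminf (fun n : ℕ => (‖w n x‖₊ : ℝ≥0∞) ^ (6:ℝ)) atTop ∂volume :=
          lintegral_congr hpt
      _ ≤ liminf (fun n : ℕ => ∫⁻ x, (‖w n x‖₊ : ℝ≥0∞) ^ (6:ℝ) ∂volume) atTop :=
          lintegral_liminf_le' hwm
      _ ≤ liminf (fun _ : ℕ => K ^ (6:ℝ)) atTop :=
          liminf_le_liminf (Eventually.of_forall hper)
      _ = K ^ (6:ℝ) := liminf_const _
  have e6f : eLpNorm (⇑f) 6 volume
      = (∫⁻ x, (‖f x‖₊ : ℝ≥0∞) ^ (6:ℝ) ∂(volume : Measure E)) ^ ((1:ℝ)/6) := by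
    rw [eLpNorm_eq_lintegral_rpow_enorm_toReal (by norm_num) (by norm_num)]
    norm_num
    rfl
  rw [e6f]
  calc (∫⁻ x, (‖f x‖₊ : ℝ≥0∞) ^ (6:ℝ) ∂(volume : Measure E)) ^ ((1:ℝ)/6)
      ≤ (K ^ (6:ℝ)) ^ ((1:ℝ)/6) := ENNReal.rpow_le_rpow hfatou (by norm_num)
    _ = K := by
        rw [← ENNReal.rpow_mul]
        norm_num

end SobolevAux

open MeasureTheory

/-- **The estimate `‖C(u,v)‖ ≤ c‖Au‖·‖Av‖` in concrete Sobolev (H²) form.**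
There is `c > 0` such that for all Schwartz vector fields `u, v : ℝ³ → ℝ³`,
`(∫ ‖(u·∇)v‖²)^{1/2} ≤ c·(∫ ‖u‖²+‖Du‖²+‖D²u‖²)^{1/2}·(∫ ‖v‖²+‖Dv‖²+‖D²v‖²)^{1/2}`. -/
theorem stmt_14 :
    ∃ c : ℝ, 0 < c ∧
      ∀ u v : SchwartzMap (EuclideanSpace ℝ (Fin 3)) (EuclideanSpace ℝ (Fin 3)),
        Real.sqrt (∫ x : EuclideanSpace ℝ (Fin 3), ‖fderiv ℝ (⇑v) x (u x)‖ ^ 2) ≤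
          c * Real.sqrt (∫ x : EuclideanSpace ℝ (Fin 3),
                (‖u x‖ ^ 2 + ‖fderiv ℝ (⇑u) x‖ ^ 2 + ‖iteratedFDeriv ℝ 2 (⇑u) x‖ ^ 2)) *
            Real.sqrt (∫ x : EuclideanSpace ℝ (Fin 3),
                (‖v x‖ ^ 2 + ‖fderiv ℝ (⇑v) x‖ ^ 2 + ‖iteratedFDeriv ℝ 2 (⇑v) x‖ ^ 2)) := by
  classical
  obtain ⟨C₁, hC₁⟩ := sobolev6 (F := EuclideanSpace ℝ (Fin 3))
  obtain ⟨C₂, hC₂⟩ := sobolev6 (F := EuclideanSpace ℝ (Fin 3) →L[ℝ] EuclideanSpace ℝ (Fin 3))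
  set D : ℝ≥0∞ := (2 * C₁ : ℝ≥0∞) * ((2 * C₂ : ℝ≥0∞)) ^ ((1:ℝ)/2) with hD
  have hDne : D ≠ ⊤ := by
    rw [hD]
    apply ENNReal.mul_ne_top
    · exact ENNReal.mul_ne_top (by norm_num) ENNReal.coe_ne_top
    · apply ENNReal.rpow_ne_top_of_nonneg (by norm_num)
      exact ENNReal.mul_ne_top (by norm_num) ENNReal.coe_ne_top
  refine ⟨D.toReal + 1, by positivity, fun u v => ?_⟩
  -- notation
  set W : EuclideanSpace ℝ (Fin 3) → EuclideanSpace ℝ (Fin 3) :=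
    fun x => fderiv ℝ (⇑v) x (u x) with hW
  set Xu : ℝ := ∫ x : EuclideanSpace ℝ (Fin 3),
    (‖u x‖ ^ 2 + ‖fderiv ℝ (⇑u) x‖ ^ 2 + ‖iteratedFDeriv ℝ 2 (⇑u) x‖ ^ 2) with hXu
  set Xv : ℝ := ∫ x : EuclideanSpace ℝ (Fin 3),
    (‖v x‖ ^ 2 + ‖fderiv ℝ (⇑v) x‖ ^ 2 + ‖iteratedFDeriv ℝ 2 (⇑v) x‖ ^ 2) with hXv
  set A : ℝ≥0∞ := ENNReal.ofReal (Real.sqrt Xu) with hA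
  set B : ℝ≥0∞ := ENNReal.ofReal (Real.sqrt Xv) with hB
  -- coercion identities for Schwartz derivatives
  have hDu_eq : ⇑(SchwartzMap.fderivCLM ℝ _ _ u) = fderiv ℝ (⇑u) := by
    funext x; exact SchwartzMap.fderivCLM_apply ℝ u x
  have hDv_eq : ⇑(SchwartzMap.fderivCLM ℝ _ _ v) = fderiv ℝ (⇑v) := by
    funext x; exact SchwartzMap.fderivCLM_apply ℝ v x
  have hDDu_eq : ⇑(SchwartzMap.fderivCLM ℝ _ _ (SchwartzMap.fderivCLM ℝ _ _ u))
      = fderiv ℝ (fderiv ℝ (⇑u)) := by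
    funext x
    rw [SchwartzMap.fderivCLM_apply, hDu_eq]
  have hDDv_eq : ⇑(SchwartzMap.fderivCLM ℝ _ _ (SchwartzMap.fderivCLM ℝ _ _ v))
      = fderiv ℝ (fderiv ℝ (⇑v)) := by
    funext x
    rw [SchwartzMap.fderivCLM_apply, hDv_eq]
  -- integrability of all the pieces
  have Iu0 : Integrable (fun x : EuclideanSpace ℝ (Fin 3) => ‖u x‖^2) volume :=
    schwartz_sq_integrable u
  have Iu1 : Integrable (fun x : EuclideanSpace ℝ (Fin 3) => ‖fderiv ℝ (⇑u) x‖^2) volume := by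
    have := schwartz_sq_integrable (SchwartzMap.fderivCLM ℝ _ _ u)
    rwa [hDu_eq] at this
  have Iu2 : Integrable
      (fun x : EuclideanSpace ℝ (Fin 3) => ‖iteratedFDeriv ℝ 2 (⇑u) x‖^2) volume := by
    have := schwartz_sq_integrable (SchwartzMap.fderivCLM ℝ _ _ (SchwartzMap.fderivCLM ℝ _ _ u))
    rw [hDDu_eq] at this
    apply this.congr
    filter_upwards with x
    rw [norm_fderiv_fderiv']
  have Iv0 : Integrable (fun x : EuclideanSpace ℝ (Fin 3) => ‖v x‖^2) volume :=
    schwartz_sq_integrable v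
  have Iv1 : Integrable (fun x : EuclideanSpace ℝ (Fin 3) => ‖fderiv ℝ (⇑v) x‖^2) volume := by
    have := schwartz_sq_integrable (SchwartzMap.fderivCLM ℝ _ _ v)
    rwa [hDv_eq] at this
  have Iv2 : Integrable
      (fun x : EuclideanSpace ℝ (Fin 3) => ‖iteratedFDeriv ℝ 2 (⇑v) x‖^2) volume := by
    have := schwartz_sq_integrable (SchwartzMap.fderivCLM ℝ _ _ (SchwartzMap.fderivCLM ℝ _ _ v))
    rw [hDDv_eq] at this
    apply this.congr
    filter_upwards with x
    rw [norm_fderiv_fderiv']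
  have IXu : Integrable (fun x : EuclideanSpace ℝ (Fin 3) =>
      (‖u x‖ ^ 2 + ‖fderiv ℝ (⇑u) x‖ ^ 2 + ‖iteratedFDeriv ℝ 2 (⇑u) x‖ ^ 2)) volume :=
    (Iu0.add Iu1).add Iu2
  have IXv : Integrable (fun x : EuclideanSpace ℝ (Fin 3) =>
      (‖v x‖ ^ 2 + ‖fderiv ℝ (⇑v) x‖ ^ 2 + ‖iteratedFDeriv ℝ 2 (⇑v) x‖ ^ 2)) volume :=
    (Iv0.add Iv1).add Iv2
  -- eLpNorm bounds by A and B
  have hu2A : eLpNorm (⇑u) 2 volume ≤ A := by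
    rw [eLpNorm_two_eq_sqrt (schwartz_memLp2 u), hA]
    apply ENNReal.ofReal_le_ofReal
    apply Real.sqrt_le_sqrt
    apply integral_mono Iu0 IXu
    intro x
    have h1 := sq_nonneg ‖fderiv ℝ (⇑u) x‖
    have h2 := sq_nonneg ‖iteratedFDeriv ℝ 2 (⇑u) x‖
    simp only
    linarith
  have huD2A : eLpNorm (fderiv ℝ (⇑u)) 2 volume ≤ A := by
    rw [← hDu_eq, eLpNorm_two_eq_sqrt (schwartz_memLp2 (SchwartzMap.fderivCLM ℝ _ _ u)), hA]
    apply ENNReal.ofReal_le_ofReal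
    apply Real.sqrt_le_sqrt
    apply integral_mono _ IXu
    · intro x
      have h1 := sq_nonneg ‖u x‖
      have h2 := sq_nonneg ‖iteratedFDeriv ℝ 2 (⇑u) x‖
      simp only [hDu_eq]
      linarith
    · have := schwartz_sq_integrable (SchwartzMap.fderivCLM ℝ _ _ u)
      exact this
  have hv2B : eLpNorm (⇑v) 2 volume ≤ B := by
    rw [eLpNorm_two_eq_sqrt (schwartz_memLp2 v), hB]
    apply ENNReal.ofReal_le_ofReal
    apply Real.sqrt_le_sqrt
    apply integral_mono Iv0 IXv
    intro x
    have h1 := sq_nonneg ‖fderiv ℝ (⇑v) x‖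
    have h2 := sq_nonneg ‖iteratedFDeriv ℝ 2 (⇑v) x‖
    simp only
    linarith
  have hvD2B : eLpNorm (fderiv ℝ (⇑v)) 2 volume ≤ B := by
    rw [← hDv_eq, eLpNorm_two_eq_sqrt (schwartz_memLp2 (SchwartzMap.fderivCLM ℝ _ _ v)), hB]
    apply ENNReal.ofReal_le_ofReal
    apply Real.sqrt_le_sqrt
    apply integral_mono _ IXv
    · intro x
      have h1 := sq_nonneg ‖v x‖
      have h2 := sq_nonneg ‖iteratedFDeriv ℝ 2 (⇑v) x‖
      simp only [hDv_eq]
      linarith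
    · exact schwartz_sq_integrable (SchwartzMap.fderivCLM ℝ _ _ v)
  have hvDD2B : eLpNorm (fderiv ℝ (fderiv ℝ (⇑v))) 2 volume ≤ B := by
    rw [← hDDv_eq,
      eLpNorm_two_eq_sqrt (schwartz_memLp2
        (SchwartzMap.fderivCLM ℝ _ _ (SchwartzMap.fderivCLM ℝ _ _ v))), hB]
    apply ENNReal.ofReal_le_ofReal
    apply Real.sqrt_le_sqrt
    apply integral_mono _ IXv
    · intro x
      have h1 := sq_nonneg ‖v x‖
      have h2 := sq_nonneg ‖fderiv ℝ (⇑v) x‖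
      simp only [hDDv_eq, norm_fderiv_fderiv']
      linarith
    · exact schwartz_sq_integrable (SchwartzMap.fderivCLM ℝ _ _ (SchwartzMap.fderivCLM ℝ _ _ v))
  -- continuity facts
  have hDv_cont : Continuous (fderiv ℝ (⇑v)) := by
    rw [← hDv_eq]; exact (SchwartzMap.fderivCLM ℝ _ _ v).2.continuous
  have hW_cont : Continuous W := hDv_cont.clm_apply u.continuous
  -- Hölder
  have Hold : eLpNorm W 2 volume
      ≤ eLpNorm (⇑u) 6 volume * eLpNorm (fderiv ℝ (⇑v)) 3 volume := by
    haveI : ENNReal.HolderTriple 6 3 2 := ⟨by have := half_eq; simp only [one_div] at this; exact this.symm⟩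
    have := eLpNorm_le_eLpNorm_mul_eLpNorm'_of_norm (μ := (volume : Measure (EuclideanSpace ℝ (Fin 3))))
      (p := 6) (q := 3) (r := 2)
      u.continuous.aestronglyMeasurable hDv_cont.aestronglyMeasurable
      (fun (a : EuclideanSpace ℝ (Fin 3))
          (L : EuclideanSpace ℝ (Fin 3) →L[ℝ] EuclideanSpace ℝ (Fin 3)) => L a) 1
      (Eventually.of_forall fun x => by
        calc ‖fderiv ℝ (⇑v) x (u x)‖ ≤ ‖fderiv ℝ (⇑v) x‖ * ‖u x‖ :=
              ContinuousLinearMap.le_opNorm _ _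
          _ = ‖u x‖ * ‖fderiv ℝ (⇑v) x‖ := mul_comm _ _
          _ = ((1 : ℝ≥0) : ℝ) * ‖u x‖ * ‖fderiv ℝ (⇑v) x‖ := by simp)
    simpa using this
  -- Sobolev bounds
  have Su : eLpNorm (⇑u) 6 volume ≤ (C₁ : ℝ≥0∞) * (A + A) :=
    (hC₁ u).trans (mul_le_mul_right (add_le_add huD2A hu2A) _)
  have SDv6 : eLpNorm (fderiv ℝ (⇑v)) 6 volume ≤ (C₂ : ℝ≥0∞) * (B + B) := by
    have h := hC₂ (SchwartzMap.fderivCLM ℝ _ _ v)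
    rw [hDv_eq] at h
    exact h.trans (mul_le_mul_right (add_le_add hvDD2B hvD2B) _)
  -- interpolation
  have Interp : eLpNorm (fderiv ℝ (⇑v)) 3 volume
      ≤ B ^ ((1:ℝ)/2) * ((C₂ : ℝ≥0∞) * (B + B)) ^ ((1:ℝ)/2) := by
    refine (interp36 hDv_cont.aestronglyMeasurable).trans ?_
    exact mul_le_mul' (ENNReal.rpow_le_rpow hvD2B (by norm_num))
      (ENNReal.rpow_le_rpow SDv6 (by norm_num))
  -- combine in ℝ≥0∞
  have hBB : B ^ ((1:ℝ)/2) * B ^ ((1:ℝ)/2) = B := by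
    rw [← ENNReal.rpow_add_of_nonneg _ _ (by norm_num) (by norm_num)]
    norm_num
  have main : eLpNorm W 2 volume ≤ D * A * B := by
    calc eLpNorm W 2 volume
        ≤ ((C₁ : ℝ≥0∞) * (A + A)) * (B ^ ((1:ℝ)/2) * ((C₂ : ℝ≥0∞) * (B + B)) ^ ((1:ℝ)/2)) :=
          Hold.trans (mul_le_mul' Su Interp)
      _ = D * A * B := by
          have h1 : (C₂ : ℝ≥0∞) * (B + B) = (2 * C₂ : ℝ≥0∞) * B := by ring
          rw [h1, ENNReal.mul_rpow_of_nonneg _ _ (by norm_num : (0:ℝ) ≤ (1:ℝ)/2)]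
          have h2 : ((C₁ : ℝ≥0∞) * (A + A))
              * (B ^ ((1:ℝ)/2) * (((2 * C₂ : ℝ≥0∞)) ^ ((1:ℝ)/2) * B ^ ((1:ℝ)/2)))
              = ((2 * C₁ : ℝ≥0∞) * ((2 * C₂ : ℝ≥0∞)) ^ ((1:ℝ)/2)) * A
                  * (B ^ ((1:ℝ)/2) * B ^ ((1:ℝ)/2)) := by ring
          rw [h2, hBB, hD]
  -- Memℒp of W and conversion back to real numbers
  have hWsq : Integrable (fun x : EuclideanSpace ℝ (Fin 3) => ‖W x‖^2) volume := by
    set Kv : ℝ := (SchwartzMap.seminorm ℝ 0 0) (SchwartzMap.fderivCLM ℝ _ _ v) with hKv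
    have hKv0 : 0 ≤ Kv := apply_nonneg _ _
    have hDvb : ∀ x, ‖fderiv ℝ (⇑v) x‖ ≤ Kv := by
      intro x
      rw [← hDv_eq]
      simpa using (SchwartzMap.fderivCLM ℝ _ _ v).le_seminorm ℝ 0 0 x
    refine ((Iu0.const_mul (Kv^2)).mono' ?_ ?_)
    · exact (hW_cont.norm.pow 2).aestronglyMeasurable
    · filter_upwards with x
      have h1 : ‖W x‖ ≤ Kv * ‖u x‖ := by
        rw [hW]
        calc ‖fderiv ℝ (⇑v) x (u x)‖ ≤ ‖fderiv ℝ (⇑v) x‖ * ‖u x‖ :=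
              ContinuousLinearMap.le_opNorm _ _
          _ ≤ Kv * ‖u x‖ := mul_le_mul_of_nonneg_right (hDvb x) (norm_nonneg _)
      have : ‖W x‖^2 ≤ Kv^2 * ‖u x‖^2 := by nlinarith [norm_nonneg (W x), norm_nonneg (u x)]
      simpa [abs_of_nonneg (sq_nonneg ‖W x‖)] using this
  have hWLp : MemLp W 2 volume :=
    (memLp_two_iff_integrable_sq_norm hW_cont.aestronglyMeasurable).mpr hWsq
  have hWeq : eLpNorm W 2 volume = ENNReal.ofReal (Real.sqrt (∫ x, ‖W x‖^2)) :=
    eLpNorm_two_eq_sqrt hWLp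
  -- finish
  have hfin : Real.sqrt (∫ x, ‖W x‖^2) ≤ (D * A * B).toReal := by
    have := ENNReal.toReal_mono (by
        apply ENNReal.mul_ne_top (ENNReal.mul_ne_top hDne ENNReal.ofReal_ne_top)
          ENNReal.ofReal_ne_top) main
    rwa [hWeq, ENNReal.toReal_ofReal (Real.sqrt_nonneg _)] at this
  have hDAB : (D * A * B).toReal = D.toReal * Real.sqrt Xu * Real.sqrt Xv := by
    rw [ENNReal.toReal_mul, ENNReal.toReal_mul, hA, hB,
      ENNReal.toReal_ofReal (Real.sqrt_nonneg _), ENNReal.toReal_ofReal (Real.sqrt_nonneg _)]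
  calc Real.sqrt (∫ x, ‖W x‖^2) ≤ (D * A * B).toReal := hfin
    _ = D.toReal * Real.sqrt Xu * Real.sqrt Xv := hDAB
    _ ≤ (D.toReal + 1) * Real.sqrt Xu * Real.sqrt Xv := by
        have := Real.sqrt_nonneg Xu
        have := Real.sqrt_nonneg Xv
        nlinarith [ENNReal.toReal_nonneg (a := D)]
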